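/- Let p_c(z) = z^n + c\,\overline{z}^k - 1 where 0 < c < 1 is real, n \ge 3, 1 \le k \le n-1, and \gcd(n,k) = 1. Then every zero z of p_c satisfies (1-c)^{1/(n-k)} < |z| < (1+c)^{1/(n-k)}. -/

import Mathlib

open Complex

/-- For `0 < c < 1`, every zero of `p_c(z) = z^n + c ẑ^k - 1` satisfies
`(1-c)^(1/(n-k)) < |z| < (1+c)^(1/(n-k))`. -/
theorem harmonic_trinomial_annulus_small_c
    (n k : ℕ) (hn : 3 ≤ n) (hk1 : 1 ≤ k) (hkn : k ≤ n - 1)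
    (hgcd : Nat.gcd n k = 1)
    (c : ℝ) (hc0 : 0 < c) (hc1 : c < 1)
    (z : ℂ) (hz : z ^ n + (c : ℂ) * (starRingEnd ℂ) z ^ k - 1 = 0) :
    (1 - c) ^ (1 / ((n : ℝ) - k)) < ‖z‖ ∧
      ‖z‖ < (1 + c) ^ (1 / ((n : ℝ) - k)) := by
  have hklt : k < n := by omega
  set m : ℕ := n - k with hm
  have hm1 : 1 ≤ m := by omega
  have hkm : k + m = n := by omega
  have hcast : (n : ℝ) - k = (m : ℝ) := by
    push_cast [hm, Nat.cast_sub hklt.le]; ring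
  have hmpos : (0 : ℝ) < (m : ℝ) := by exact_mod_cast hm1
  set r : ℝ := ‖z‖ with hr
  have hr0 : 0 ≤ r := norm_nonneg z
  have hzne : z ≠ 0 := by
    intro h; rw [h] at hz
    simp [zero_pow (by omega : n ≠ 0), zero_pow (by omega : k ≠ 0)] at hz
  have hrpos : 0 < r := norm_pos_iff.mpr hzne
  have heq : z ^ n + (c : ℂ) * (starRingEnd ℂ) z ^ k = 1 := by linear_combination hz
  have habs : ‖z ^ n + (c : ℂ) * (starRingEnd ℂ) z ^ k‖ = 1 := by
    rw [heq]; simp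
  have habs2 : ‖(c : ℂ) * (starRingEnd ℂ) z ^ k‖ = c * r ^ k := by
    simp [norm_mul, norm_pow, Complex.norm_conj, abs_of_pos hc0, hr]
  have h1 : r ^ n ≤ 1 + c * r ^ k := by
    have := norm_sub_norm_le (z ^ n) (-((c : ℂ) * (starRingEnd ℂ) z ^ k)); rw [sub_neg_eq_add, norm_neg] at this
    rw [habs, habs2] at this
    have hzn : ‖z ^ n‖ = r ^ n := by simp [hr]
    rw [hzn] at this; linarith
  have h2 : 1 ≤ r ^ n + c * r ^ k := by
    have := norm_add_le (z ^ n) ((c : ℂ) * (starRingEnd ℂ) z ^ k)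
    rw [habs, habs2] at this
    have hzn : ‖z ^ n‖ = r ^ n := by simp [hr]
    rw [hzn] at this; linarith
  have hrn : r ^ n = r ^ k * r ^ m := by rw [← pow_add, hkm]
  constructor
  · -- lower bound
    rw [hcast]
    by_contra hcon
    push_neg at hcon
    set L : ℝ := (1 - c) ^ (1 / (m : ℝ)) with hL
    have hLm : L ^ m = 1 - c := by
      rw [hL, ← Real.rpow_natCast ((1 - c) ^ (1 / (m : ℝ))) m,
        ← Real.rpow_mul (by linarith), one_div_mul_cancel (ne_of_gt hmpos),
        Real.rpow_one]
    have hL1 : L < 1 := Real.rpow_lt_one (by linarith) (by linarith)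
      (by positivity)
    have hr1 : r < 1 := lt_of_le_of_lt hcon hL1
    have hrm : r ^ m ≤ 1 - c := by
      calc r ^ m ≤ L ^ m := pow_le_pow_left₀ hr0 hcon m
        _ = 1 - c := hLm
    have hrk : r ^ k < 1 := pow_lt_one₀ hr0 hr1 (by omega)
    nlinarith [pow_pos hrpos k]
  · -- upper bound
    rw [hcast]
    by_contra hcon
    push_neg at hcon
    set B : ℝ := (1 + c) ^ (1 / (m : ℝ)) with hB
    have hBm : B ^ m = 1 + c := by
      rw [hB, ← Real.rpow_natCast ((1 + c) ^ (1 / (m : ℝ))) m,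
        ← Real.rpow_mul (by linarith), one_div_mul_cancel (ne_of_gt hmpos),
        Real.rpow_one]
    have hB1 : 1 < B := Real.one_lt_rpow_iff_of_pos (by linarith) |>.mpr
      (Or.inl ⟨by linarith, by positivity⟩)
    have hr1 : 1 < r := lt_of_lt_of_le hB1 hcon
    have hrm : 1 + c ≤ r ^ m := by
      calc (1 + c) = B ^ m := hBm.symm
        _ ≤ r ^ m := pow_le_pow_left₀ (by linarith) hcon m
    have hrk : 1 < r ^ k := one_lt_pow₀ hr1 (by omega)
    nlinarith [pow_pos hrpos k]
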